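/- In a finite rooted tree where the root has d children and every other non-leaf vertex has exactly d-1 children (a 'd-regular tree'), with leaves ordered by breadth-first-search visit time, the tree distance between two leaves with indices i and j (i ≠ j) is at least 2·(1 + log_{d-1}((|i - j| + 1)/d)). -/

import Mathlib

/-- Tree distance in the canonical `d`-regular tree of height `h` between the
leaves with BFS indices `i` and `j` (0-based): twice the number of levels one
must go up to reach the lowest common ancestor.  The ancestor of leaf `i`
located `k` levels above the leaf level has BFS index `i / (d-1)^k` within its
level (for `k < h`), and at `k = h` the two leaves meet at the root. -/
noncomputable def treeLeafDist (d h i j : ℕ) : ℕ :=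
  2 * sInf {k : ℕ | k = h ∨ i / (d - 1) ^ k = j / (d - 1) ^ k}

/-- In a `d`-regular tree of height `h` (root has `d` children, every other
non-leaf vertex has `d-1` children), with leaves ordered by BFS visit time,
the tree distance between two distinct leaves with indices `i` and `j` is at
least `2 * (1 + log_{d-1}((|i - j| + 1) / d))`. -/
theorem stmt0 (d h : ℕ) (hd : 3 ≤ d) (hh : 1 ≤ h)
    (i j : ℕ) (hi : i < d * (d - 1) ^ (h - 1)) (hj : j < d * (d - 1) ^ (h - 1))
    (hij : i ≠ j) :
    2 * (1 + Real.logb ((d : ℝ) - 1) ((|(i : ℝ) - (j : ℝ)| + 1) / d)) ≤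
      (treeLeafDist d h i j : ℝ) := by
  have hb1 : (1 : ℝ) < (d : ℝ) - 1 := by
    have : (3 : ℝ) ≤ (d : ℝ) := by exact_mod_cast hd
    linarith
  set S : Set ℕ := {k : ℕ | k = h ∨ i / (d - 1) ^ k = j / (d - 1) ^ k} with hS
  have hne : S.Nonempty := ⟨h, Or.inl rfl⟩
  set K := sInf S with hK
  have hKmem : K ∈ S := Nat.sInf_mem hne
  have hK1 : 1 ≤ K := by
    rcases Nat.eq_zero_or_pos K with h0 | hpos
    · exfalso
      have h0' : (0 : ℕ) ∈ S := h0 ▸ hKmem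
      rcases h0' with h' | h'
      · omega
      · simp at h'; omega
    · exact hpos
  -- natural-number distance
  set D : ℕ := max i j - min i j with hD
  have habs : |(i : ℝ) - (j : ℝ)| = (D : ℝ) := by
    rcases le_total i j with hle | hle
    · have hij' : (i : ℝ) ≤ (j : ℝ) := by exact_mod_cast hle
      rw [abs_of_nonpos (by linarith)]
      have hDe : D = j - i := by omega
      rw [hDe, Nat.cast_sub hle]; ring
    · have hij' : (j : ℝ) ≤ (i : ℝ) := by exact_mod_cast hle
      rw [abs_of_nonneg (by linarith)]
      have hDe : D = i - j := by omega
      rw [hDe, Nat.cast_sub hle]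
  have keyNat : D + 1 ≤ d * (d - 1) ^ (K - 1) := by
    rcases hKmem with hKh | hKdiv
    · -- K = h : both indices are < d*(d-1)^(h-1)
      have : D < d * (d - 1) ^ (h - 1) := by
        rcases le_total i j with hle | hle <;> omega
      rw [hKh]; omega
    · -- same quotient : difference < (d-1)^K
      set n : ℕ := (d - 1) ^ K with hn'
      have hn : 0 < n := Nat.pow_pos (by omega)
      have e1 : i = n * (j / n) + i % n := by
        rw [← hKdiv]; exact (Nat.div_add_mod i n).symm
      have e2 : j = n * (j / n) + j % n := (Nat.div_add_mod j n).symm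
      have hmi : i % n < n := Nat.mod_lt _ hn
      have hmj : j % n < n := Nat.mod_lt _ hn
      have hDlt : D < n := by
        obtain ⟨C, hC⟩ : ∃ C, n * (j / n) = C := ⟨_, rfl⟩
        rw [hC] at e1 e2
        obtain ⟨a, ha⟩ : ∃ a, i % n = a := ⟨_, rfl⟩
        obtain ⟨b, hb⟩ : ∃ b, j % n = b := ⟨_, rfl⟩
        rw [ha] at e1 hmi; rw [hb] at e2 hmj
        omega
      have hpow : n ≤ d * (d - 1) ^ (K - 1) := by
        calc n = (d - 1) ^ (K - 1) * (d - 1) := by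
              rw [hn', ← pow_succ]
              congr 1
              omega
          _ ≤ (d - 1) ^ (K - 1) * d := Nat.mul_le_mul_left _ (by omega)
          _ = d * (d - 1) ^ (K - 1) := Nat.mul_comm _ _
      omega
  have hd1cast : ((d - 1 : ℕ) : ℝ) = (d : ℝ) - 1 := by
    have : (1 : ℕ) ≤ d := by omega
    push_cast [this]; ring
  have keyR : (|(i : ℝ) - (j : ℝ)| + 1) / d ≤ ((d : ℝ) - 1) ^ (K - 1) := by
    rw [habs, div_le_iff₀ (by positivity)]
    calc (D : ℝ) + 1 ≤ (d : ℝ) * ((d : ℝ) - 1) ^ (K - 1) := by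
          rw [← hd1cast]; exact_mod_cast keyNat
      _ = ((d : ℝ) - 1) ^ (K - 1) * d := by ring
  have hxpos : 0 < (|(i : ℝ) - (j : ℝ)| + 1) / d := by positivity
  have hlog : Real.logb ((d : ℝ) - 1) ((|(i : ℝ) - (j : ℝ)| + 1) / d) ≤ (K - 1 : ℕ) := by
    calc Real.logb ((d : ℝ) - 1) ((|(i : ℝ) - (j : ℝ)| + 1) / d)
        ≤ Real.logb ((d : ℝ) - 1) (((d : ℝ) - 1) ^ (K - 1)) :=
          Real.logb_le_logb_of_le hb1 hxpos keyR
      _ = (K - 1 : ℕ) := by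
          rw [Real.logb_pow, Real.logb_self_eq_one hb1, mul_one]
  have hKcast : ((K - 1 : ℕ) : ℝ) = (K : ℝ) - 1 := by
    push_cast [hK1]; ring
  have hdist : treeLeafDist d h i j = 2 * K := rfl
  rw [hdist]
  push_cast
  rw [hKcast] at hlog
  linarith
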